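/- Fix Λ ∈ ℝ, c₁ ∈ ℝ \ {0} and c₂ ∈ ℝ. Define a(t) = 4·exp((t+c₂)/c₁) / (c₁²·exp(2(t+c₂)/c₁) − 4Λ). Then at every t where c₁²·exp(2(t+c₂)/c₁) − 4Λ ≠ 0, the function a satisfies the ordinary differential equation (a'/a)'(t) = Λ·a(t)². -/

import Mathlib

/-- The explicit lapse function `a(t) = 4·exp((t+c₂)/c₁)/(c₁²·exp(2(t+c₂)/c₁) − 4Λ)`
satisfies the ODE `(a'/a)' = Λ·a²` wherever its denominator is nonzero (the case
`λ = 0` of the separation `(a'/a)' − Λa² = λ`). -/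
theorem lapse_ode_lambda_zero
    (Λ c₁ c₂ : ℝ) (hc₁ : c₁ ≠ 0)
    (a : ℝ → ℝ)
    (ha : ∀ t, a t = 4 * Real.exp ((t + c₂) / c₁)
      / (c₁ ^ 2 * Real.exp (2 * (t + c₂) / c₁) - 4 * Λ)) :
    ∀ t : ℝ, c₁ ^ 2 * Real.exp (2 * (t + c₂) / c₁) - 4 * Λ ≠ 0 →
      deriv (fun s => deriv a s / a s) t = Λ * a t ^ 2 := by
  intro t ht
  set E : ℝ → ℝ := fun s => Real.exp ((s + c₂) / c₁) with hE
  have hexp2 : ∀ s : ℝ, Real.exp (2 * (s + c₂) / c₁) = (E s) ^ 2 := by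
    intro s
    rw [hE, show 2 * (s + c₂) / c₁ = (s + c₂) / c₁ + (s + c₂) / c₁ by ring,
      Real.exp_add]
    ring
  set D : ℝ → ℝ := fun s => c₁ ^ 2 * (E s) ^ 2 - 4 * Λ with hDdef
  have hEpos : ∀ s, 0 < E s := fun s => Real.exp_pos _
  have hEne : ∀ s, E s ≠ 0 := fun s => (hEpos s).ne'
  have hEderiv : ∀ s, HasDerivAt E (E s / c₁) s := by
    intro s
    have h1 : HasDerivAt (fun s : ℝ => (s + c₂) / c₁) (1 / c₁) s :=
      ((hasDerivAt_id s).add_const c₂).div_const c₁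
    have := h1.exp
    simpa [hE, div_eq_mul_inv, mul_comm] using this
  have hDderiv : ∀ s, HasDerivAt D (2 * c₁ * (E s) ^ 2) s := by
    intro s
    have h2 : HasDerivAt (fun s => (E s) ^ 2) (2 * E s * (E s / c₁)) s := by
      simpa using (hEderiv s).fun_pow 2
    have h3 := (h2.const_mul (c₁ ^ 2)).sub_const (4 * Λ)
    refine h3.congr_deriv ?_
    field_simp
  have ha' : a = fun s => 4 * E s / D s := by
    funext s
    rw [ha s, hexp2 s]
  have hDt : D t ≠ 0 := by
    rw [hDdef]
    simpa [hexp2 t] using ht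
  -- derivative of a where D ≠ 0
  have haderiv : ∀ s, D s ≠ 0 →
      deriv a s = (4 * (E s / c₁) * D s - 4 * E s * (2 * c₁ * (E s) ^ 2)) / (D s) ^ 2 := by
    intro s hs
    rw [ha']
    exact (((hEderiv s).const_mul 4).div (hDderiv s) hs).deriv
  -- the nice form of a'/a
  set f : ℝ → ℝ := fun s => 1 / c₁ - 2 * c₁ * (E s) ^ 2 / D s with hf
  have hDopen : IsOpen {s : ℝ | D s ≠ 0} := by
    have hc : Continuous D := by
      rw [hDdef]
      fun_prop
    exact isOpen_compl_singleton.preimage hc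
  have hev : ∀ᶠ s in nhds t, deriv a s / a s = f s := by
    filter_upwards [hDopen.mem_nhds hDt] with s hs
    rw [haderiv s hs, ha', hf]
    simp only
    rw [hDdef] at hs ⊢
    have := hEne s
    simp only at hs
    have hs' : E s ^ 2 * c₁ ^ 2 - 4 * Λ ≠ 0 := by rwa [mul_comm] at hs
    field_simp
  have hfd : HasDerivAt f
      (-((2 * c₁ * (2 * E t * (E t / c₁)) * D t -
          2 * c₁ * (E t) ^ 2 * (2 * c₁ * (E t) ^ 2)) / (D t) ^ 2)) t := by
    have h2 : HasDerivAt (fun s => (E s) ^ 2) (2 * E t * (E t / c₁)) t := by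
      simpa using (hEderiv t).fun_pow 2
    have hq := ((h2.const_mul (2 * c₁)).fun_div (hDderiv t) hDt)
    have := (hasDerivAt_const t (1 / c₁)).fun_sub hq
    simpa [hf, mul_assoc] using this
  have : deriv (fun s => deriv a s / a s) t = deriv f t :=
    Filter.EventuallyEq.deriv_eq hev
  rw [this, hfd.deriv, ha']
  simp only
  rw [hDdef] at hDt ⊢
  field_simp
  ring
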